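/- arXiv:2104.08050 — 3 statements merged into one kernel-verified Lean document; each statement's English description precedes it below -/
import Mathlib

section
/- For λ > 0, μ > 0, the function F(s) = (μ/(s+μ))³ · (λ/(s+λ)) · (s² + 2s(λ+μ) + λ² + λμ + μ²)/(λ² + λμ + μ²) satisfies F(0) = 1 and -F'(0) = (3λ³ + 2λ²μ + 2λμ² + μ³)/(λμ(λ² + λμ + μ²)). -/
open Real

theorem stmt7 (lam mu : ℝ) (hlam : 0 < lam) (hmu : 0 < mu) :
    (fun s : ℝ => (mu / (s + mu))^3 * (lam / (s + lam)) *
        ((s^2 + 2*s*(lam + mu) + lam^2 + lam*mu + mu^2) / (lam^2 + lam*mu + mu^2))) 0 = 1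
    ∧ - deriv (fun s : ℝ => (mu / (s + mu))^3 * (lam / (s + lam)) *
        ((s^2 + 2*s*(lam + mu) + lam^2 + lam*mu + mu^2) / (lam^2 + lam*mu + mu^2))) 0
      = (3*lam^3 + 2*lam^2*mu + 2*lam*mu^2 + mu^3) / (lam * mu * (lam^2 + lam*mu + mu^2)) := by
  have hD : lam^2 + lam*mu + mu^2 ≠ 0 := by positivity
  have heq : (fun s : ℝ => (mu / (s + mu))^3 * (lam / (s + lam)) *
        ((s^2 + 2*s*(lam + mu) + lam^2 + lam*mu + mu^2) / (lam^2 + lam*mu + mu^2)))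
      = fun s : ℝ => (mu^3 * lam * (s^2 + 2*s*(lam + mu) + lam^2 + lam*mu + mu^2)) /
        ((s + mu)^3 * ((s + lam) * (lam^2 + lam*mu + mu^2))) := by
    funext s
    rw [div_pow, div_mul_div_comm, div_mul_div_comm]
    ring_nf
  have hq : HasDerivAt (fun s : ℝ => s^2 + 2*s*(lam + mu) + lam^2 + lam*mu + mu^2)
      (2*(lam+mu)) 0 := by
    have h1 := hasDerivAt_pow 2 (0:ℝ)
    have h2 := ((hasDerivAt_id (0:ℝ)).const_mul 2).mul_const (lam+mu)
    have h := (((h1.add h2).add_const (lam^2)).add_const (lam*mu)).add_const (mu^2)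
    exact h.congr_deriv (by norm_num)
  have hN : HasDerivAt
      (fun s : ℝ => mu^3 * lam * (s^2 + 2*s*(lam + mu) + lam^2 + lam*mu + mu^2))
      (mu^3 * lam * (2*(lam+mu))) 0 := hq.const_mul _
  have h3 : HasDerivAt (fun s : ℝ => (s + mu)^3) (3*(0+mu)^2*1) 0 := by
    have := ((hasDerivAt_id (0:ℝ)).add_const mu).pow 3
    exact this.congr_deriv (by norm_num)
  have h4 : HasDerivAt (fun s : ℝ => (s + lam) * (lam^2 + lam*mu + mu^2))
      (1 * (lam^2 + lam*mu + mu^2)) 0 :=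
    ((hasDerivAt_id (0:ℝ)).add_const lam).mul_const _
  have hG := h3.mul h4
  have hG0 : ((0:ℝ) + mu)^3 * ((0 + lam) * (lam^2 + lam*mu + mu^2)) ≠ 0 := by
    rw [zero_add, zero_add]; positivity
  have hF := hN.div hG hG0
  constructor
  · simp only
    rw [zero_add, zero_add, div_self hmu.ne', div_self hlam.ne']
    norm_num
    exact hD
  · have hF' : HasDerivAt (fun s : ℝ => (mu^3 * lam * (s^2 + 2*s*(lam + mu) + lam^2 + lam*mu + mu^2)) /
          ((s + mu)^3 * ((s + lam) * (lam^2 + lam*mu + mu^2)))) _ 0 := hF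
    rw [heq, hF'.deriv]
    simp only [Pi.mul_apply]
    rw [zero_add, zero_add]
    field_simp
    ring
end

section
/- For λ > 0, μ > 0, s ≥ 0, the product (μ/(μ+s)) · (μ/(μ+λ) + λ/(λ+μ+s)) · ((μ²/(λ²+λμ+μ²))·(λ/(λ+s))·((λ+μ)/(λ+μ+s)) + ((λ²+λμ)/(λ²+λμ+μ²))·(μ/(μ+s))) evaluated at s = 0 equals 1, and its negative derivative at s = 0 equals (2λ⁵ + 7λ⁴μ + 8λ³μ² + 7λ²μ³ + 4λμ⁴ + μ⁵)/(λμ(λ+μ)²(λ²+λμ+μ²)). -/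
open Real

lemma hda (c d : ℝ) (hd : d ≠ 0) :
    HasDerivAt (fun s : ℝ => c / (d + s)) (-(c / d ^ 2)) 0 := by
  have h := (hasDerivAt_const (0:ℝ) c).div
    ((hasDerivAt_const (0:ℝ) d).add (hasDerivAt_id 0)) (by simpa using hd)
  exact h.congr_deriv (by simp only [Pi.add_apply, id, add_zero, zero_add, zero_mul, zero_sub, mul_one]; field_simp)

theorem stmt13 (lam mu : ℝ) (hlam : 0 < lam) (hmu : 0 < mu) :
    (fun s : ℝ => (mu / (mu + s)) * (mu / (mu + lam) + lam / (lam + mu + s)) *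
        ((mu^2 / (lam^2 + lam*mu + mu^2)) * (lam / (lam + s)) * ((lam + mu) / (lam + mu + s))
          + ((lam^2 + lam*mu) / (lam^2 + lam*mu + mu^2)) * (mu / (mu + s)))) 0 = 1
    ∧ - deriv (fun s : ℝ => (mu / (mu + s)) * (mu / (mu + lam) + lam / (lam + mu + s)) *
        ((mu^2 / (lam^2 + lam*mu + mu^2)) * (lam / (lam + s)) * ((lam + mu) / (lam + mu + s))
          + ((lam^2 + lam*mu) / (lam^2 + lam*mu + mu^2)) * (mu / (mu + s)))) 0
      = (2*lam^5 + 7*lam^4*mu + 8*lam^3*mu^2 + 7*lam^2*mu^3 + 4*lam*mu^4 + mu^5)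
          / (lam * mu * (lam + mu)^2 * (lam^2 + lam*mu + mu^2)) := by
  have hlm : lam + mu ≠ 0 := by positivity
  have hmu' : mu ≠ 0 := hmu.ne'
  have hlam' : lam ≠ 0 := hlam.ne'
  have hml : mu + lam ≠ 0 := by positivity
  have hq : lam^2 + lam*mu + mu^2 ≠ 0 := by positivity
  constructor
  · simp only []
    field_simp
    ring
  · -- build HasDerivAt
    have hA := hda mu mu hmu'
    have hB := ((hasDerivAt_const (0:ℝ) (mu / (mu + lam))).add (hda lam (lam + mu) hlm))
    have hC1 := ((hasDerivAt_const (0:ℝ) (mu^2 / (lam^2 + lam*mu + mu^2))).mul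
        (hda lam lam hlam')).mul (hda (lam + mu) (lam + mu) hlm)
    have hC2 := (hasDerivAt_const (0:ℝ) ((lam^2 + lam*mu) / (lam^2 + lam*mu + mu^2))).mul
        (hda mu mu hmu')
    have hC := hC1.add hC2
    have hF := (hA.mul hB).mul hC
    have hd := hF.deriv
    simp only [Pi.mul_def, Pi.add_def] at hd
    rw [hd]
    field_simp
    ring
end

section
/- For m > 0, let L_m(s) = 1/(m s e^s + 1). If m < 1 then there exists s₀ > 0 such that L_m''(s) < 0 for all s ∈ (0, s₀); in particular, for m < 1, L_m is not completely monotone on (0,∞) and hence is not the Laplace transform of any nonnegative random variable. -/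
open MeasureTheory Real Set Filter

private lemma gpos15 {m : ℝ} (hm : 0 < m) (hm1 : m < 1) (s : ℝ) :
    0 < m * s * Real.exp s + 1 := by
  rcases le_or_gt 0 s with hs | hs
  · have h := Real.exp_pos s
    nlinarith [mul_nonneg (mul_nonneg hm.le hs) h.le]
  · -- -s ≤ exp (-(1+s)) and exp (-(1+s)) * exp s = exp (-1) ≤ 1
    have h1 : -(1 + s) + 1 ≤ Real.exp (-(1 + s)) := Real.add_one_le_exp _
    have h2 : Real.exp (-(1 + s)) * Real.exp s = Real.exp (-1) := by
      rw [← Real.exp_add]; ring_nf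
    have h3 : Real.exp (-1) ≤ 1 := Real.exp_le_one_iff.mpr (by norm_num)
    have h4 : Real.exp s > 0 := Real.exp_pos s
    -- -s * exp s ≤ exp (-1) ≤ 1
    have h5 : (-s) * Real.exp s ≤ 1 := by
      calc (-s) * Real.exp s ≤ Real.exp (-(1 + s)) * Real.exp s := by
            apply mul_le_mul_of_nonneg_right _ h4.le
            linarith
        _ = Real.exp (-1) := h2
        _ ≤ 1 := h3
    nlinarith

private lemma hasDerivG15 (m : ℝ) (s : ℝ) :
    HasDerivAt (fun s : ℝ => m * s * Real.exp s + 1) (m * Real.exp s * (1 + s)) s := by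
  have h1 : HasDerivAt (fun s : ℝ => m * s) m s := by
    simpa using (hasDerivAt_id s).const_mul m
  have h2 := (h1.mul (Real.hasDerivAt_exp s)).add_const 1
  refine h2.congr_deriv ?_
  ring

private lemma hasDerivL15 {m : ℝ} (hm : 0 < m) (hm1 : m < 1) (s : ℝ) :
    HasDerivAt (fun s : ℝ => 1 / (m * s * Real.exp s + 1))
      (-(m * Real.exp s * (1 + s)) / (m * s * Real.exp s + 1) ^ 2) s := by
  have h := (hasDerivAt_const s (1 : ℝ)).div (hasDerivG15 m s) (gpos15 hm hm1 s).ne'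
  refine h.congr_deriv ?_
  ring

private lemma hasDerivL15' {m : ℝ} (hm : 0 < m) (hm1 : m < 1) (s : ℝ) :
    HasDerivAt (fun s : ℝ => -(m * Real.exp s * (1 + s)) / (m * s * Real.exp s + 1) ^ 2)
      ((2 * (m * Real.exp s * (1 + s)) ^ 2
        - (m * s * Real.exp s + 1) * (m * Real.exp s * (2 + s)))
        / (m * s * Real.exp s + 1) ^ 3) s := by
  have hu : HasDerivAt (fun s : ℝ => -(m * Real.exp s * (1 + s)))
      (-(m * Real.exp s * (2 + s))) s := by
    have h1 : HasDerivAt (fun s : ℝ => m * Real.exp s) (m * Real.exp s) s :=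
      (Real.hasDerivAt_exp s).const_mul m
    have h2 : HasDerivAt (fun s : ℝ => 1 + s) 1 s := by
      simpa using (hasDerivAt_id s).const_add 1
    have h3 := (h1.mul h2).neg
    refine h3.congr_deriv ?_
    ring
  have hv := (hasDerivG15 m s).pow 2
  have hg0 : m * s * Real.exp s + 1 ≠ 0 := (gpos15 hm hm1 s).ne'
  have h := hu.div hv (pow_ne_zero 2 hg0)
  refine h.congr_deriv ?_
  simp only [Pi.pow_apply, Nat.cast_ofNat, show (2:ℕ) - 1 = 1 from rfl, pow_one]
  rw [div_eq_div_iff (pow_ne_zero 2 (pow_ne_zero 2 hg0)) (pow_ne_zero 3 hg0)]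
  ring

private lemma iterDeriv2_15 {m : ℝ} (hm : 0 < m) (hm1 : m < 1) (s : ℝ) :
    iteratedDeriv 2 (fun s : ℝ => 1 / (m * s * Real.exp s + 1)) s
      = (2 * (m * Real.exp s * (1 + s)) ^ 2
        - (m * s * Real.exp s + 1) * (m * Real.exp s * (2 + s)))
        / (m * s * Real.exp s + 1) ^ 3 := by
  have hd1 : deriv (fun s : ℝ => 1 / (m * s * Real.exp s + 1))
      = fun s => -(m * Real.exp s * (1 + s)) / (m * s * Real.exp s + 1) ^ 2 :=
    funext fun s => (hasDerivL15 hm hm1 s).deriv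
  rw [show (2 : ℕ) = 1 + 1 from rfl, iteratedDeriv_succ, iteratedDeriv_one, hd1]
  exact (hasDerivL15' hm hm1 s).deriv

theorem stmt15 (m : ℝ) (hm : 0 < m) (hm1 : m < 1) :
    (∃ s₀ > 0, ∀ s ∈ Set.Ioo 0 s₀,
      iteratedDeriv 2 (fun s : ℝ => 1 / (m * s * Real.exp s + 1)) s < 0)
    ∧ ¬ (∀ (n : ℕ) (s : ℝ), 0 < s →
        0 ≤ (-1)^n * iteratedDeriv n (fun s : ℝ => 1 / (m * s * Real.exp s + 1)) s)
    ∧ ¬ ∃ ν : Measure ℝ, IsProbabilityMeasure ν ∧ ν (Set.Iio 0) = 0 ∧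
        ∀ s : ℝ, 0 ≤ s →
          (∫ x, Real.exp (-s * x) ∂ν) = 1 / (m * s * Real.exp s + 1) := by
  set L : ℝ → ℝ := fun s => 1 / (m * s * Real.exp s + 1) with hLdef
  set N : ℝ → ℝ := fun s => 2 * (m * Real.exp s * (1 + s)) ^ 2
        - (m * s * Real.exp s + 1) * (m * Real.exp s * (2 + s)) with hNdef
  have hNcont : Continuous N := by
    unfold N; fun_prop
  have hN0 : N 0 < 0 := by
    have : N 0 = 2 * m ^ 2 - 2 * m := by simp [hNdef]; ring
    nlinarith
  have hev : ∀ᶠ s in nhds (0 : ℝ), N s < 0 :=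
    (hNcont.tendsto 0).eventually_lt_const hN0
  rw [Metric.eventually_nhds_iff] at hev
  obtain ⟨ε, hε, hball⟩ := hev
  have key : ∀ s ∈ Set.Ioo (0:ℝ) ε, iteratedDeriv 2 L s < 0 := by
    intro s hs
    rw [iterDeriv2_15 hm hm1 s]
    apply div_neg_of_neg_of_pos
    · exact hball (by simp [abs_of_pos hs.1, Real.dist_eq]; exact hs.2)
    · exact pow_pos (gpos15 hm hm1 s) 3
  refine ⟨⟨ε, hε, key⟩, ?_, ?_⟩
  · intro h
    have h1 := h 2 (ε / 2) (by linarith)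
    have h2 := key (ε / 2) ⟨by linarith, by linarith⟩
    simp only [neg_one_sq, one_mul] at h1
    linarith
  · rintro ⟨ν, hprob, hsupp, hLap⟩
    -- integrability
    have hint : ∀ s : ℝ, 0 ≤ s → Integrable (fun x => Real.exp (-s * x)) ν := by
      intro s hs
      by_contra hni
      have := hLap s hs
      rw [integral_undef hni] at this
      have hg := gpos15 hm hm1 s
      have : (0:ℝ) < 0 := by
        nlinarith [this, one_div_pos.mpr hg]
      exact lt_irrefl _ this
    -- convexity of L on Ici 0
    have hconv : ConvexOn ℝ (Set.Ici (0:ℝ)) L := by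
      refine ⟨convex_Ici 0, ?_⟩
      intro a ha b hb p q hp hq hpq
      simp only [smul_eq_mul]
      have hab : (0:ℝ) ≤ p * a + q * b := by
        have := mul_nonneg hp ha
        have := mul_nonneg hq hb
        linarith
      simp only [hLdef]
      rw [← hLap a ha, ← hLap b hb, ← hLap _ hab]
      have hptw : ∀ x : ℝ, Real.exp (-(p * a + q * b) * x)
          ≤ p * Real.exp (-a * x) + q * Real.exp (-b * x) := by
        intro x
        have := convexOn_exp.2 (Set.mem_univ (-a * x)) (Set.mem_univ (-b * x)) hp hq hpq
        simp only [smul_eq_mul] at this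
        calc Real.exp (-(p * a + q * b) * x)
            = Real.exp (p * (-a * x) + q * (-b * x)) := by ring_nf
          _ ≤ p * Real.exp (-a * x) + q * Real.exp (-b * x) := this
      calc (∫ x, Real.exp (-(p * a + q * b) * x) ∂ν)
          ≤ ∫ x, (p * Real.exp (-a * x) + q * Real.exp (-b * x)) ∂ν := by
            apply integral_mono (hint _ hab)
            · exact ((hint a ha).const_mul p).add ((hint b hb).const_mul q)
            · exact hptw
        _ = p * (∫ x, Real.exp (-a * x) ∂ν) + q * (∫ x, Real.exp (-b * x) ∂ν) := by
            rw [integral_add ((hint a ha).const_mul p) ((hint b hb).const_mul q),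
              integral_const_mul, integral_const_mul]
    -- derivative of L is monotone on Ici 0
    have hmono : MonotoneOn (deriv L) (Set.Ici (0:ℝ)) :=
      hconv.monotoneOn_deriv fun x _ => (hasDerivL15 hm hm1 x).differentiableAt
    have hderivL : deriv L
        = fun s => -(m * Real.exp s * (1 + s)) / (m * s * Real.exp s + 1) ^ 2 :=
      funext fun s => (hasDerivL15 hm hm1 s).deriv
    rw [hderivL] at hmono
    set L1 : ℝ → ℝ := fun s => -(m * Real.exp s * (1 + s)) / (m * s * Real.exp s + 1) ^ 2
      with hL1def
    -- second derivative nonneg at s := ε/2 via slopes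
    set s := ε / 2 with hsdef
    have hs : 0 < s := by unfold s; linarith
    have hd := hasDerivL15' hm hm1 s
    set D : ℝ := (2 * (m * Real.exp s * (1 + s)) ^ 2
        - (m * s * Real.exp s + 1) * (m * Real.exp s * (2 + s)))
        / (m * s * Real.exp s + 1) ^ 3 with hDdef
    have hDnonneg : 0 ≤ D := by
      have hd' := hd
      rw [hasDerivAt_iff_tendsto_slope] at hd'
      refine ge_of_tendsto hd' ?_
      have hmem : ∀ᶠ y in nhdsWithin s {s}ᶜ, y ∈ Set.Ioi (0:ℝ) :=
        eventually_nhdsWithin_of_eventually_nhds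
          (eventually_mem_nhds_iff.mpr ((isOpen_Ioi.mem_nhds hs)) |>.mono fun y hy => by
            exact mem_of_mem_nhds hy)
      filter_upwards [hmem, self_mem_nhdsWithin] with y hy hy'
      have hyne : y ≠ s := hy'
      rw [slope_def_field]
      rcases lt_or_gt_of_ne hyne with hlt | hgt
      · apply div_nonneg_of_nonpos
        · have := hmono (Set.mem_Ici.mpr (le_of_lt hy)) (Set.mem_Ici.mpr hs.le) hlt.le
          linarith
        · linarith
      · apply div_nonneg
        · have := hmono (Set.mem_Ici.mpr hs.le) (Set.mem_Ici.mpr (le_of_lt hy)) hgt.le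
          linarith
        · linarith
    have hneg := key s ⟨hs, by unfold s; linarith⟩
    rw [iterDeriv2_15 hm hm1 s] at hneg
    exact absurd hneg (not_lt.mpr hDnonneg)
end
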